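/- arXiv:2102.13465 — 3 statements merged into one kernel-verified Lean document; each statement's English description precedes it below -/
import Mathlib

section
/- Let φ : U(1) × SU(2) × SU(3) → SU(5) be the homomorphism sending (α, A, B) to the block-diagonal matrix diag(α³A, α⁻²B). Then the kernel of φ is cyclic of order 6, consisting exactly of the elements (α, α⁻³·I₂, α²·I₃) where α ranges over the sixth roots of unity. -/
/-- `SU n` is the special unitary group of `n × n` complex matrices. -/
abbrev SU (n : ℕ) := Matrix.specialUnitaryGroup (Fin n) ℂ

/-- The homomorphism `φ : U(1) × SU(2) × SU(3) → SU(5)` (written with values in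
`5 × 5` matrices), `φ(α, A, B) = diag(α³ A, α⁻² B)`. -/
noncomputable def phi (x : Circle × SU 2 × SU 3) : Matrix (Fin 5) (Fin 5) ℂ :=
  Matrix.reindex finSumFinEquiv finSumFinEquiv
    (Matrix.fromBlocks (((x.1 : ℂ) ^ 3) • (x.2.1 : Matrix (Fin 2) (Fin 2) ℂ)) 0 0
      ((((x.1 : ℂ) ^ 2)⁻¹) • (x.2.2 : Matrix (Fin 3) (Fin 3) ℂ)))

/-- A primitive sixth root of unity on the circle. -/
noncomputable def zeta6 : Circle := Circle.exp (Real.pi / 3)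

lemma zeta6_prim : IsPrimitiveRoot (zeta6 : ℂ) 6 := by
  have h : (zeta6 : ℂ) = Complex.exp (2 * Real.pi * Complex.I / 6) := by
    rw [zeta6, Circle.coe_exp]; congr 1; push_cast; ring
  rw [h]
  exact_mod_cast Complex.isPrimitiveRoot_exp 6 (by norm_num)

lemma zeta6_pow_six : (zeta6 : ℂ) ^ 6 = 1 := zeta6_prim.pow_eq_one

lemma zeta6_conj_pow (m : ℕ) :
    ((zeta6 : ℂ) ^ m) * starRingEnd ℂ ((zeta6 : ℂ) ^ m) = 1 := by
  rw [map_pow, ← mul_pow]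
  simp [Complex.mul_conj, Complex.normSq_eq_norm_sq, Circle.norm_coe]

lemma zeta6_conj_inv (m : ℕ) :
    (((zeta6 : ℂ) ^ m)⁻¹) * starRingEnd ℂ (((zeta6 : ℂ) ^ m)⁻¹) = 1 := by
  rw [map_inv₀, ← mul_inv, zeta6_conj_pow, inv_one]

lemma smul_one_mem_SU (n : ℕ) (z : ℂ) (hz : z * starRingEnd ℂ z = 1) (h : z ^ n = 1) :
    z • (1 : Matrix (Fin n) (Fin n) ℂ) ∈ Matrix.specialUnitaryGroup (Fin n) ℂ := by
  rw [Matrix.mem_specialUnitaryGroup_iff]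
  constructor
  · rw [Matrix.mem_unitaryGroup_iff, Matrix.star_eq_conjTranspose,
      Matrix.conjTranspose_smul, Matrix.conjTranspose_one]
    simp [Matrix.smul_mul, Matrix.mul_smul, smul_smul, hz]
    rw [mul_comm, hz, one_smul]
  · simp [Matrix.det_smul, h, Finset.card_fin]

/-- The generator of the kernel. -/
noncomputable def gKer : Circle × SU 2 × SU 3 :=
  (zeta6,
   ⟨(((zeta6 : ℂ) ^ 3)⁻¹) • 1,
     smul_one_mem_SU 2 _ (zeta6_conj_inv 3)
       (by rw [← inv_pow, ← pow_mul]; norm_num [zeta6_pow_six])⟩,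
   ⟨((zeta6 : ℂ) ^ 2) • 1,
     smul_one_mem_SU 3 _ (zeta6_conj_pow 2)
       (by rw [← pow_mul]; norm_num [zeta6_pow_six])⟩)

lemma gKer_pow_fst (k : ℕ) : ((gKer ^ k).1 : ℂ) = (zeta6 : ℂ) ^ k := rfl

lemma gKer_pow_snd₁ (k : ℕ) :
    ((gKer ^ k).2.1 : Matrix (Fin 2) (Fin 2) ℂ)
      = ((((zeta6 : ℂ) ^ k) ^ 3)⁻¹) • (1 : Matrix (Fin 2) (Fin 2) ℂ) := by
  have h : ((gKer ^ k).2.1 : Matrix (Fin 2) (Fin 2) ℂ)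
      = ((((zeta6 : ℂ) ^ 3)⁻¹) • (1 : Matrix (Fin 2) (Fin 2) ℂ)) ^ k := rfl
  rw [h, smul_pow, one_pow, inv_pow, ← pow_mul, ← pow_mul, Nat.mul_comm]

lemma gKer_pow_snd₂ (k : ℕ) :
    ((gKer ^ k).2.2 : Matrix (Fin 3) (Fin 3) ℂ)
      = (((zeta6 : ℂ) ^ k) ^ 2) • (1 : Matrix (Fin 3) (Fin 3) ℂ) := by
  have h : ((gKer ^ k).2.2 : Matrix (Fin 3) (Fin 3) ℂ)
      = (((zeta6 : ℂ) ^ 2) • (1 : Matrix (Fin 3) (Fin 3) ℂ)) ^ k := rfl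
  rw [h, smul_pow, one_pow, ← pow_mul, ← pow_mul, Nat.mul_comm]

lemma phi_eq_one_iff' (x : Circle × SU 2 × SU 3) :
    phi x = 1 ↔ ((x.1 : ℂ) ^ 3) • (x.2.1 : Matrix (Fin 2) (Fin 2) ℂ) = 1 ∧
      (((x.1 : ℂ) ^ 2)⁻¹) • (x.2.2 : Matrix (Fin 3) (Fin 3) ℂ) = 1 := by
  have h1 : (1 : Matrix (Fin 5) (Fin 5) ℂ)
      = Matrix.reindex finSumFinEquiv finSumFinEquiv
          (Matrix.fromBlocks (1 : Matrix (Fin 2) (Fin 2) ℂ) 0 0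
            (1 : Matrix (Fin 3) (Fin 3) ℂ)) := by
    simp [Matrix.fromBlocks_one]
  rw [phi, h1, Equiv.apply_eq_iff_eq, Matrix.fromBlocks_inj]
  simp

lemma phi_key (x : Circle × SU 2 × SU 3) : phi x = 1 ↔
    ((x.1 : ℂ) ^ 6 = 1 ∧
      (x.2.1 : Matrix (Fin 2) (Fin 2) ℂ) = (((x.1 : ℂ) ^ 3)⁻¹) • (1 : Matrix (Fin 2) (Fin 2) ℂ) ∧
      (x.2.2 : Matrix (Fin 3) (Fin 3) ℂ) = ((x.1 : ℂ) ^ 2) • (1 : Matrix (Fin 3) (Fin 3) ℂ)) := by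
  obtain ⟨α, A, B⟩ := x
  have hα : (α : ℂ) ≠ 0 := Circle.coe_ne_zero α
  have h3 : (α : ℂ) ^ 3 ≠ 0 := pow_ne_zero _ hα
  have h2 : (α : ℂ) ^ 2 ≠ 0 := pow_ne_zero _ hα
  rw [phi_eq_one_iff']
  constructor
  · rintro ⟨hA, hB⟩
    have hdetA : (A : Matrix (Fin 2) (Fin 2) ℂ).det = 1 := A.2.2
    have h6 : (α : ℂ) ^ 6 = 1 := by
      have := congrArg Matrix.det hA
      rw [Matrix.det_smul, hdetA, Matrix.det_one] at this
      simpa [Fintype.card_fin, ← pow_mul] using this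
    refine ⟨h6, ?_, ?_⟩
    · rw [← hA, smul_smul, inv_mul_cancel₀ h3, one_smul]
    · rw [← hB, smul_smul, mul_inv_cancel₀ h2, one_smul]
  · rintro ⟨h6, hA, hB⟩
    constructor
    · rw [hA, smul_smul, mul_inv_cancel₀ h3, one_smul]
    · rw [hB, smul_smul, inv_mul_cancel₀ h2, one_smul]

lemma gKer_pow_eq (k : ℕ) (x : Circle × SU 2 × SU 3)
    (h1 : (x.1 : ℂ) = (zeta6 : ℂ) ^ k)
    (h2 : (x.2.1 : Matrix (Fin 2) (Fin 2) ℂ) = (((x.1 : ℂ) ^ 3)⁻¹) • 1)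
    (h3 : (x.2.2 : Matrix (Fin 3) (Fin 3) ℂ) = ((x.1 : ℂ) ^ 2) • 1) :
    x = gKer ^ k := by
  obtain ⟨α, A, B⟩ := x
  refine Prod.ext ?_ (Prod.ext ?_ ?_)
  · exact Subtype.ext (h1.trans (gKer_pow_fst k).symm)
  · exact Subtype.ext (by rw [gKer_pow_snd₁ k, ← h1]; exact h2)
  · exact Subtype.ext (by rw [gKer_pow_snd₂ k, ← h1]; exact h3)

/-- The kernel of `φ` consists exactly of the elements `(α, α⁻³·I₂, α²·I₃)` with `α` a sixth
root of unity, and it is cyclic of order 6. -/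
theorem kernel_phi_eq_Z6 :
    (∀ x : Circle × SU 2 × SU 3, phi x = 1 ↔
      ((x.1 : ℂ) ^ 6 = 1 ∧
        (x.2.1 : Matrix (Fin 2) (Fin 2) ℂ) = (((x.1 : ℂ) ^ 3)⁻¹) • (1 : Matrix (Fin 2) (Fin 2) ℂ) ∧
        (x.2.2 : Matrix (Fin 3) (Fin 3) ℂ) = ((x.1 : ℂ) ^ 2) • (1 : Matrix (Fin 3) (Fin 3) ℂ))) ∧
    ∃ g : Circle × SU 2 × SU 3, phi g = 1 ∧ g ^ 6 = 1 ∧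
      (∀ k : ℕ, 0 < k → k < 6 → g ^ k ≠ 1) ∧
      {x | phi x = 1} = {x | ∃ k : ℕ, x = g ^ k} := by
  refine ⟨phi_key, gKer, ?_, ?_, ?_, ?_⟩
  · rw [phi_key]
    exact ⟨zeta6_pow_six, rfl, rfl⟩
  · exact (gKer_pow_eq 6 1 zeta6_pow_six.symm (by norm_num) (by norm_num)).symm
  · intro k hk0 hk6 h
    have := congrArg (fun y => ((y.1 : Circle) : ℂ)) h
    simp only [gKer_pow_fst] at this
    exact zeta6_prim.pow_ne_one_of_pos_of_lt hk0.ne' hk6 this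
  · ext x
    simp only [Set.mem_setOf_eq]
    rw [phi_key]
    constructor
    · rintro ⟨h6, hA, hB⟩
      obtain ⟨k, _, hk⟩ := zeta6_prim.eq_pow_of_pow_eq_one h6
      exact ⟨k, gKer_pow_eq k x hk.symm hA hB⟩
    · rintro ⟨k, rfl⟩
      refine ⟨?_, ?_, ?_⟩
      · rw [gKer_pow_fst, ← pow_mul, Nat.mul_comm, pow_mul, zeta6_pow_six, one_pow]
      · rw [gKer_pow_snd₁, gKer_pow_fst]
      · rw [gKer_pow_snd₂, gKer_pow_fst]
end

section
/- The image of the homomorphism φ : U(1) × SU(2) × SU(3) → SU(5), φ(α,A,B) = diag(α³A, α⁻²B), is exactly the subgroup S(U(2)×U(3)) = {(A,B) ∈ U(2)×U(3) embedded block-diagonally : det A · det B = 1} of SU(5). Consequently (U(1)×SU(2)×SU(3))/ker φ ≅ S(U(2)×U(3)). -/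
private lemma star_mul_self_of_abs_eq_one {c : ℂ} (h : ‖c‖ = 1) : star c * c = 1 := by
  rw [Complex.star_def, mul_comm, Complex.mul_conj, Complex.normSq_eq_norm_sq, h]
  norm_num

private lemma smul_mem_unitary {n : ℕ} (c : ℂ) (M : Matrix (Fin n) (Fin n) ℂ)
    (hc : ‖c‖ = 1) (hM : M ∈ Matrix.unitaryGroup (Fin n) ℂ) :
    c • M ∈ Matrix.unitaryGroup (Fin n) ℂ := by
  rw [Matrix.mem_unitaryGroup_iff'] at *
  rw [Matrix.star_eq_conjTranspose, Matrix.conjTranspose_smul, Matrix.smul_mul, Matrix.mul_smul,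
    smul_smul, star_mul_self_of_abs_eq_one hc, one_smul, ← Matrix.star_eq_conjTranspose, hM]



/-- The subgroup `S(U(2)×U(3))` of `SU(5)`: block-diagonal matrices `diag(A, B)` with
`A ∈ U(2)`, `B ∈ U(3)` and `det A · det B = 1`. -/
def SU2xU3 : Set (Matrix (Fin 5) (Fin 5) ℂ) :=
  {M | ∃ A ∈ Matrix.unitaryGroup (Fin 2) ℂ, ∃ B ∈ Matrix.unitaryGroup (Fin 3) ℂ,
    A.det * B.det = 1 ∧ M = Matrix.reindex finSumFinEquiv finSumFinEquiv (Matrix.fromBlocks A 0 0 B)}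

/-- `φ` is a homomorphism whose image is exactly `S(U(2)×U(3))`; consequently, by the first
isomorphism theorem, `(U(1)×SU(2)×SU(3))/ker φ ≅ S(U(2)×U(3))`. -/
theorem range_phi_eq_SU2xU3 :
    (∀ x y : Circle × SU 2 × SU 3, phi (x * y) = phi x * phi y) ∧
    Set.range phi = SU2xU3 := by
  constructor
  · intro x y
    have h : phi x * phi y = Matrix.reindex finSumFinEquiv finSumFinEquiv
        ((Matrix.fromBlocks (((x.1 : ℂ) ^ 3) • (x.2.1 : Matrix (Fin 2) (Fin 2) ℂ)) 0 0
          ((((x.1 : ℂ) ^ 2)⁻¹) • (x.2.2 : Matrix (Fin 3) (Fin 3) ℂ))) *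
         (Matrix.fromBlocks (((y.1 : ℂ) ^ 3) • (y.2.1 : Matrix (Fin 2) (Fin 2) ℂ)) 0 0
          ((((y.1 : ℂ) ^ 2)⁻¹) • (y.2.2 : Matrix (Fin 3) (Fin 3) ℂ)))) := by
      simp [phi, Matrix.reindex_apply, Matrix.submatrix_mul_equiv]
    rw [h]
    simp only [phi, Prod.fst_mul, Prod.snd_mul, Circle.coe_mul, Submonoid.coe_mul,
      Matrix.fromBlocks_multiply, Matrix.smul_mul, Matrix.mul_smul, smul_smul,
      Matrix.zero_mul, Matrix.mul_zero, add_zero, zero_add, smul_zero]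
    rw [show (((x.1 : ℂ) * y.1) ^ 3) = (x.1 : ℂ) ^ 3 * (y.1 : ℂ) ^ 3 from by ring,
      show ((((x.1 : ℂ) * y.1) ^ 2)⁻¹) = ((x.1 : ℂ) ^ 2)⁻¹ * ((y.1 : ℂ) ^ 2)⁻¹ from by
        rw [mul_pow, mul_inv]]
    rw [mul_comm ((x.1 : ℂ) ^ 3), mul_comm (((x.1 : ℂ) ^ 2)⁻¹)]
  · ext M
    constructor
    · rintro ⟨⟨α, A, B⟩, rfl⟩
      refine ⟨((α : ℂ) ^ 3) • A, ?_, (((α : ℂ) ^ 2)⁻¹) • B, ?_, ?_, rfl⟩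
      · exact smul_mem_unitary _ _ (by simp [Circle.norm_coe]) A.2.1
      · exact smul_mem_unitary _ _ (by simp [Circle.norm_coe]) B.2.1
      · have hA : (A : Matrix (Fin 2) (Fin 2) ℂ).det = 1 :=
          (Matrix.mem_specialUnitaryGroup_iff.mp A.2).2
        have hB : (B : Matrix (Fin 3) (Fin 3) ℂ).det = 1 :=
          (Matrix.mem_specialUnitaryGroup_iff.mp B.2).2
        rw [Matrix.det_smul, Matrix.det_smul, hA, hB]
        simp only [Fintype.card_fin, mul_one]
        field_simp
    · rintro ⟨A, hA, B, hB, hdet, rfl⟩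
      have hdu := (Unitary.mem_iff.mp (Matrix.det_of_mem_unitary hA)).1
      have hd : ‖A.det‖ = 1 := by
        have h1 : ‖A.det‖ ^ 2 = 1 := by
          have := congrArg norm hdu
          rwa [norm_mul, Complex.star_def, Complex.norm_conj, norm_one, ← sq] at this
        nlinarith [norm_nonneg A.det]
      obtain ⟨α, hα⟩ := IsAlgClosed.exists_pow_nat_eq A.det (n := 6) (by norm_num)
      have habs : ‖α‖ = 1 := by
        have h6 : ‖α‖ ^ 6 = 1 := by rw [← norm_pow, hα, hd]
        nlinarith [norm_nonneg α, sq_nonneg (‖α‖ - 1),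
          sq_nonneg (‖α‖ + 1), sq_nonneg (‖α‖ ^ 2 - 1),
          sq_nonneg (‖α‖ ^ 3 - 1)]
      have hαne : α ≠ 0 := by intro h; rw [h] at habs; simp at habs
      have hA' : ((α ^ 3)⁻¹) • A ∈ SU 2 := by
        rw [Matrix.mem_specialUnitaryGroup_iff]
        refine ⟨smul_mem_unitary _ _ (by simp [habs]) hA, ?_⟩
        rw [Matrix.det_smul, ← hα]
        simp only [Fintype.card_fin]
        field_simp
      have hB' : (α ^ 2) • B ∈ SU 3 := by
        rw [Matrix.mem_specialUnitaryGroup_iff]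
        refine ⟨smul_mem_unitary _ _ (by simp [habs]) hB, ?_⟩
        rw [Matrix.det_smul]
        simp only [Fintype.card_fin]
        rw [← pow_mul]
        norm_num
        rw [hα, hdet]
      refine ⟨(⟨α, by simp [Submonoid.unitSphere, mem_sphere_zero_iff_norm,
        habs]⟩, ⟨_, hA'⟩, ⟨_, hB'⟩), ?_⟩
      simp only [phi, smul_smul]
      rw [mul_inv_cancel₀ (pow_ne_zero 3 hαne), inv_mul_cancel₀ (pow_ne_zero 2 hαne),
        one_smul, one_smul]
end

section
/- Let V be a vector space with a nonsingular symmetric bilinear form, Cl(V) its Clifford algebra, and α : Cl(V) → Cl(V) the grading automorphism induced by −1 on V. If x ∈ Cl(V) satisfies x·v = v·α(x) for all v ∈ V, then x is a scalar (a multiple of 1). -/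
open CliffordAlgebra

namespace CliffordCentralAux

variable {K V : Type*} [Field K] [AddCommGroup V] [Module K V]
variable {Q : QuadraticForm K V}

theorem contractLeft_mul (d : Module.Dual K V) (a b : CliffordAlgebra Q) :
    contractLeft d (a * b) =
      contractLeft d a * b + involute a * contractLeft d b := by
  induction a using CliffordAlgebra.left_induction with
  | algebraMap r =>
      rw [contractLeft_algebraMap_mul, contractLeft_algebraMap, zero_mul,
        involute.commutes, zero_add]
  | add x y hx hy =>
      simp only [add_mul, map_add, hx, hy]
      abel
  | ι_mul x m hx =>
      rw [mul_assoc, contractLeft_ι_mul, hx, contractLeft_ι_mul, map_mul involute, involute_ι]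
      simp only [mul_add, sub_mul, smul_mul_assoc, neg_mul, mul_assoc, mul_sub]
      abel

theorem ι_mul_sub_involute_mul (v : V) (x : CliffordAlgebra Q) :
    ι Q v * x - involute x * ι Q v
      = contractLeft (QuadraticMap.polarBilin Q v) x := by
  induction x using CliffordAlgebra.left_induction with
  | algebraMap r =>
      rw [contractLeft_algebraMap, involute.commutes, Algebra.commutes, sub_self]
  | add x y hx hy =>
      simp only [map_add, mul_add, add_mul, ← hx, ← hy]
      abel
  | ι_mul x m hx =>
      rw [contractLeft_ι_mul, map_mul involute, involute_ι]
      simp only [QuadraticMap.polarBilin_apply_apply]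
      rw [Algebra.smul_def, ← CliffordAlgebra.ι_mul_ι_add_swap, ← hx]
      noncomm_ring

section Basis

variable {n : ℕ} (Q) (e : Module.Basis (Fin n) K V)

/-- The subalgebra generated by the images of the basis vectors indexed by `s`. -/
def Asub (s : Set (Fin n)) : Subalgebra K (CliffordAlgebra Q) :=
  Algebra.adjoin K ((fun i => ι Q (e i)) '' s)

theorem ι_mem_Asub {s : Set (Fin n)} {i : Fin n} (hi : i ∈ s) : ι Q (e i) ∈ Asub Q e s :=
  Algebra.subset_adjoin ⟨i, hi, rfl⟩

theorem Asub_mono {s t : Set (Fin n)} (h : s ⊆ t) : Asub Q e s ≤ Asub Q e t :=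
  Algebra.adjoin_mono (Set.image_mono h)

theorem involute_mem_Asub {s : Set (Fin n)} {x : CliffordAlgebra Q} (hx : x ∈ Asub Q e s) :
    involute x ∈ Asub Q e s := by
  induction hx using Algebra.adjoin_induction with
  | mem y hy =>
      obtain ⟨i, hi, rfl⟩ := hy
      rw [involute_ι]
      exact neg_mem (ι_mem_Asub Q e hi)
  | algebraMap r => rw [involute.commutes]; exact algebraMap_mem _ r
  | add y z hy hz ihy ihz => rw [map_add]; exact add_mem ihy ihz
  | mul y z hy hz ihy ihz => rw [map_mul]; exact mul_mem ihy ihz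

variable (horth : ∀ i j : Fin n, i ≠ j → Q.IsOrtho (e i) (e j))

include horth in
theorem ι_mul_mem_eq {s : Set (Fin n)} {j : Fin n} (hj : j ∉ s) {x : CliffordAlgebra Q}
    (hx : x ∈ Asub Q e s) :
    ι Q (e j) * x = involute x * ι Q (e j) := by
  induction hx using Algebra.adjoin_induction with
  | mem y hy =>
      obtain ⟨i, hi, rfl⟩ := hy
      rw [involute_ι, neg_mul, CliffordAlgebra.ι_mul_ι_comm_of_isOrtho]
      exact horth j i (fun h => hj (h ▸ hi))
  | algebraMap r => rw [involute.commutes, Algebra.commutes]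
  | add y z hy hz ihy ihz => rw [map_add, mul_add, add_mul, ihy, ihz]
  | mul y z hy hz ihy ihz =>
      rw [map_mul, ← mul_assoc, ihy, mul_assoc, ihz, ← mul_assoc]

theorem contract_eq_zero_of_mem {s : Set (Fin n)} {j : Fin n} (hj : j ∉ s)
    {x : CliffordAlgebra Q} (hx : x ∈ Asub Q e s) :
    contractLeft (e.coord j) x = 0 := by
  induction hx using Algebra.adjoin_induction with
  | mem y hy =>
      obtain ⟨i, hi, rfl⟩ := hy
      rw [contractLeft_ι]
      have : e.coord j (e i) = 0 := by
        rw [Module.Basis.coord_apply, Module.Basis.repr_self, Finsupp.single_apply_eq_zero]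
        exact fun h => absurd (h ▸ hi) hj
      rw [this, map_zero]
  | algebraMap r => rw [contractLeft_algebraMap]
  | add y z hy hz ihy ihz => rw [map_add, ihy, ihz, add_zero]
  | mul y z hy hz ihy ihz => rw [contractLeft_mul, ihy, ihz, zero_mul, mul_zero, add_zero]

include horth in
theorem exists_decomp {s : Set (Fin n)} {j : Fin n} (hj : j ∉ s) {x : CliffordAlgebra Q}
    (hx : x ∈ Asub Q e (insert j s)) :
    ∃ a ∈ Asub Q e s, ∃ b ∈ Asub Q e s, x = a + b * ι Q (e j) := by
  induction hx using Algebra.adjoin_induction with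
  | mem y hy =>
      obtain ⟨i, hi, rfl⟩ := hy
      rcases Set.mem_insert_iff.mp hi with rfl | hi
      · exact ⟨0, zero_mem _, 1, one_mem _, by rw [one_mul, zero_add]⟩
      · exact ⟨ι Q (e i), ι_mem_Asub Q e hi, 0, zero_mem _, by rw [zero_mul, add_zero]⟩
  | algebraMap r =>
      exact ⟨algebraMap K _ r, algebraMap_mem _ r, 0, zero_mem _, by rw [zero_mul, add_zero]⟩
  | add y z hy hz ihy ihz =>
      obtain ⟨a, ha, b, hb, rfl⟩ := ihy
      obtain ⟨a', ha', b', hb', rfl⟩ := ihz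
      exact ⟨a + a', add_mem ha ha', b + b', add_mem hb hb', by noncomm_ring⟩
  | mul y z hy hz ihy ihz =>
      obtain ⟨a, ha, b, hb, rfl⟩ := ihy
      obtain ⟨a', ha', b', hb', rfl⟩ := ihz
      refine ⟨a * a' + b * involute b' * algebraMap K _ (Q (e j)), ?_,
        a * b' + b * involute a', ?_, ?_⟩
      · exact add_mem (mul_mem ha ha')
          (mul_mem (mul_mem hb (involute_mem_Asub Q e hb')) (algebraMap_mem _ _))
      · exact add_mem (mul_mem ha hb') (mul_mem hb (involute_mem_Asub Q e ha'))
      · have h1 : ι Q (e j) * a' = involute a' * ι Q (e j) := ι_mul_mem_eq Q e horth hj ha'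
        have h2 : ι Q (e j) * b' = involute b' * ι Q (e j) := ι_mul_mem_eq Q e horth hj hb'
        have hsq : ι Q (e j) * ι Q (e j) = algebraMap K _ (Q (e j)) :=
          CliffordAlgebra.ι_sq_scalar Q (e j)
        calc (a + b * ι Q (e j)) * (a' + b' * ι Q (e j))
            = a * a' + a * (b' * ι Q (e j)) + b * (ι Q (e j) * a')
              + b * (ι Q (e j) * b') * ι Q (e j) := by noncomm_ring
          _ = a * a' + a * (b' * ι Q (e j)) + b * (involute a' * ι Q (e j))
              + b * involute b' * (ι Q (e j) * ι Q (e j)) := by rw [h1, h2]; noncomm_ring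
          _ = _ := by rw [hsq]; noncomm_ring

end Basis

section Ops

variable {n : ℕ} (Q) (e : Module.Basis (Fin n) K V)

/-- `Fop d v x = x - v * (d ⌋ x)`. -/
noncomputable def Fop (d : Module.Dual K V) (v : V) :
    CliffordAlgebra Q →ₗ[K] CliffordAlgebra Q :=
  LinearMap.id - LinearMap.mulLeft K (ι Q v) ∘ₗ contractLeft d

theorem Fop_apply (d : Module.Dual K V) (v : V) (x : CliffordAlgebra Q) :
    Fop Q d v x = x - ι Q v * contractLeft d x := rfl

/-- Composition of the `Fop` operators along a list of basis indices. -/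
noncomputable def Gop : List (Fin n) → (CliffordAlgebra Q →ₗ[K] CliffordAlgebra Q)
  | [] => LinearMap.id
  | i :: l => Fop Q (e.coord i) (e i) ∘ₗ Gop l

theorem Gop_nil (x : CliffordAlgebra Q) : Gop Q e [] x = x := rfl

theorem Gop_cons (i : Fin n) (l : List (Fin n)) (x : CliffordAlgebra Q) :
    Gop Q e (i :: l) x = Fop Q (e.coord i) (e i) (Gop Q e l x) := rfl

theorem Gop_append (l₁ l₂ : List (Fin n)) (x : CliffordAlgebra Q) :
    Gop Q e (l₁ ++ l₂) x = Gop Q e l₁ (Gop Q e l₂ x) := by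
  induction l₁ with
  | nil => rfl
  | cons i l ih => rw [List.cons_append, Gop_cons, Gop_cons, ih]

theorem coord_apply_eq_zero {i j : Fin n} (h : i ≠ j) : e.coord i (e j) = 0 := by
  rw [Module.Basis.coord_apply, Module.Basis.repr_self, Finsupp.single_apply, if_neg (Ne.symm h)]

theorem coord_apply_eq_one (i : Fin n) : e.coord i (e i) = 1 := by
  rw [Module.Basis.coord_apply, Module.Basis.repr_self, Finsupp.single_eq_same]

theorem Gop_algebraMap (l : List (Fin n)) (r : K) :
    Gop Q e l (algebraMap K (CliffordAlgebra Q) r) = algebraMap K _ r := by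
  induction l with
  | nil => rfl
  | cons i l ih => rw [Gop_cons, ih, Fop_apply, contractLeft_algebraMap, mul_zero, sub_zero]

variable (horth : ∀ i j : Fin n, i ≠ j → Q.IsOrtho (e i) (e j))

include horth in
theorem Fop_ι_comm {i j : Fin n} (h : i ≠ j) (z : CliffordAlgebra Q) :
    Fop Q (e.coord i) (e i) (ι Q (e j) * z)
      = ι Q (e j) * Fop Q (e.coord i) (e i) z := by
  rw [Fop_apply, Fop_apply, contractLeft_ι_mul, coord_apply_eq_zero e h, zero_smul, zero_sub,
    mul_neg, sub_neg_eq_add, mul_sub, ← mul_assoc, ← mul_assoc,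
    CliffordAlgebra.ι_mul_ι_comm_of_isOrtho (horth i j h)]
  simp only [neg_mul, mul_neg, neg_neg]
  abel

include horth in
theorem Gop_ι_comm {j : Fin n} {l : List (Fin n)} (hj : j ∉ l) (x : CliffordAlgebra Q) :
    Gop Q e l (ι Q (e j) * x) = ι Q (e j) * Gop Q e l x := by
  induction l with
  | nil => rfl
  | cons i l ih =>
      have hij : i ≠ j := fun h => hj (h ▸ List.mem_cons_self)
      have hjl : j ∉ l := fun h => hj (List.mem_cons_of_mem _ h)
      rw [Gop_cons, ih hjl, Fop_ι_comm Q e horth hij, Gop_cons]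

theorem Fop_contract_comm {i j : Fin n} (h : i ≠ j) (z : CliffordAlgebra Q) :
    contractLeft (e.coord j) (Fop Q (e.coord i) (e i) z)
      = Fop Q (e.coord i) (e i) (contractLeft (e.coord j) z) := by
  rw [Fop_apply, Fop_apply, map_sub, contractLeft_ι_mul,
    coord_apply_eq_zero e (Ne.symm h), zero_smul, zero_sub,
    contractLeft_comm]
  simp only [neg_mul, mul_neg, neg_neg]

theorem Gop_contract_comm {j : Fin n} {l : List (Fin n)} (hj : j ∉ l) (x : CliffordAlgebra Q) :
    contractLeft (e.coord j) (Gop Q e l x) = Gop Q e l (contractLeft (e.coord j) x) := by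
  induction l with
  | nil => rfl
  | cons i l ih =>
      have hij : i ≠ j := fun h => hj (h ▸ List.mem_cons_self)
      have hjl : j ∉ l := fun h => hj (List.mem_cons_of_mem _ h)
      rw [Gop_cons, Fop_contract_comm Q e hij, ih hjl, Gop_cons]

theorem Fop_ι_self (i : Fin n) (z : CliffordAlgebra Q) :
    Fop Q (e.coord i) (e i) (ι Q (e i) * z)
      = Q (e i) • contractLeft (e.coord i) z := by
  rw [Fop_apply, contractLeft_ι_mul, coord_apply_eq_one, one_smul, mul_sub, ← mul_assoc,
    CliffordAlgebra.ι_sq_scalar, ← Algebra.smul_def]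
  abel

include horth in
theorem Gop_mem (x : CliffordAlgebra Q) :
    ∀ l : List (Fin n), l.Nodup → Gop Q e l x ∈ Asub Q e {i | i ∉ l} := by
  induction x using CliffordAlgebra.left_induction with
  | algebraMap r =>
      intro l _
      rw [Gop_algebraMap]
      exact algebraMap_mem _ r
  | add x y hx hy =>
      intro l hl
      rw [map_add]
      exact add_mem (hx l hl) (hy l hl)
  | ι_mul x m hx =>
      intro l hl
      have hm : ι Q m * x = ∑ i : Fin n, e.repr m i • (ι Q (e i) * x) := by
        conv_lhs => rw [← e.sum_repr m]
        rw [map_sum, Finset.sum_mul]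
        simp only [map_smul, smul_mul_assoc]
      rw [hm, map_sum]
      refine Subalgebra.sum_mem _ fun i _ => ?_
      rw [map_smul]
      refine Subalgebra.smul_mem _ ?_ _
      by_cases hi : i ∈ l
      · -- split the list at `i`
        obtain ⟨l₁, l₂, rfl⟩ := List.append_of_mem hi
        have hl₁ : l₁.Nodup := hl.of_append_left
        have hl₂' : (i :: l₂).Nodup := hl.of_append_right
        have hl₂ : l₂.Nodup := (List.nodup_cons.mp hl₂').2
        have hil₂ : i ∉ l₂ := (List.nodup_cons.mp hl₂').1
        have hdisj : l₁.Disjoint (i :: l₂) := (List.nodup_append'.mp hl).2.2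
        have hil₁ : i ∉ l₁ := fun h => hdisj h List.mem_cons_self
        have hnd : (l₁ ++ l₂).Nodup := by
          rw [List.nodup_append']
          exact ⟨hl₁, hl₂, fun a ha ha' => hdisj ha (List.mem_cons_of_mem _ ha')⟩
        have key : Gop Q e (l₁ ++ i :: l₂) (ι Q (e i) * x)
            = Q (e i) • contractLeft (e.coord i) (Gop Q e (l₁ ++ l₂) x) := by
          rw [Gop_append, Gop_cons, Gop_ι_comm Q e horth hil₂, Fop_ι_self, map_smul,
            ← Gop_contract_comm Q e hil₁, ← Gop_append]
        rw [key]
        -- the decomposition step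
        have hsub : Asub Q e {k | k ∉ l₁ ++ l₂}
            ≤ Asub Q e (insert i {k | k ∉ l₁ ++ i :: l₂}) := by
          refine Asub_mono Q e fun k hk => ?_
          by_cases hki : k = i
          · rw [hki]; exact Set.mem_insert _ _
          · refine Set.mem_insert_of_mem _ ?_
            simp only [Set.mem_setOf_eq, List.mem_append, List.mem_cons] at hk ⊢
            tauto
        have hz : Gop Q e (l₁ ++ l₂) x ∈ Asub Q e (insert i {k | k ∉ l₁ ++ i :: l₂}) :=
          hsub (hx (l₁ ++ l₂) hnd)
        have hinotin : i ∉ {k | k ∉ l₁ ++ i :: l₂} := by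
          simp only [Set.mem_setOf_eq, not_not]
          exact hi
        obtain ⟨a, ha, b, hb, hab⟩ := exists_decomp Q e horth hinotin hz
        have hLa : contractLeft (e.coord i) a = 0 := contract_eq_zero_of_mem Q e hinotin ha
        have hLb : contractLeft (e.coord i) b = 0 := contract_eq_zero_of_mem Q e hinotin hb
        have : contractLeft (e.coord i) (Gop Q e (l₁ ++ l₂) x) = involute b := by
          rw [hab, map_add, hLa, contractLeft_mul, hLb, zero_mul, contractLeft_ι,
            coord_apply_eq_one, map_one, mul_one, zero_add, zero_add]
        rw [this]
        exact Subalgebra.smul_mem _ (involute_mem_Asub Q e hb) _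
      · rw [Gop_ι_comm Q e horth hi]
        exact mul_mem (ι_mem_Asub Q e hi) (hx l hl)

include horth in
theorem scalar_of_forall_contract_eq_zero {x : CliffordAlgebra Q}
    (h : ∀ d : Module.Dual K V, contractLeft d x = 0) :
    ∃ c : K, x = algebraMap K (CliffordAlgebra Q) c := by
  have hfix : ∀ l : List (Fin n), Gop Q e l x = x := by
    intro l
    induction l with
    | nil => rfl
    | cons i l ih => rw [Gop_cons, ih, Fop_apply, h, mul_zero, sub_zero]
  have hmem := Gop_mem Q e horth x (List.finRange n) (List.nodup_finRange n)
  rw [hfix] at hmem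
  have hset : {i : Fin n | i ∉ List.finRange n} = ∅ := by
    ext i
    simp [List.mem_finRange]
  rw [hset] at hmem
  unfold Asub at hmem
  rw [Set.image_empty, Algebra.adjoin_empty, Algebra.mem_bot] at hmem
  obtain ⟨c, hc⟩ := hmem
  exact ⟨c, hc.symm⟩

end Ops

end CliffordCentralAux

/-- Let `V` carry a nonsingular symmetric bilinear form, `Cl(V)` its Clifford algebra, and
`α` the grading automorphism (induced by `−1` on `V`).  If `x ∈ Cl(V)` satisfies
`x·v = v·α(x)` for all `v ∈ V`, then `x` is a scalar. -/
theorem clifford_central_element_is_scalar {K V : Type*} [Field K] [CharZero K]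
    [AddCommGroup V] [Module K V] [FiniteDimensional K V]
    (B : LinearMap.BilinForm K V) (hB : B.IsSymm) (hBnd : B.Nondegenerate)
    (x : CliffordAlgebra B.toQuadraticMap)
    (hx : ∀ v : V, x * ι B.toQuadraticMap v = ι B.toQuadraticMap v * involute x) :
    ∃ c : K, x = algebraMap K (CliffordAlgebra B.toQuadraticMap) c := by
  haveI : Invertible (2 : K) := invertibleOfNonzero two_ne_zero
  obtain ⟨e, he⟩ := LinearMap.BilinForm.exists_orthogonal_basis (LinearMap.BilinForm.isSymm_iff.mp hB)
  have horth : ∀ i j : Fin (Module.finrank K V), i ≠ j →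
      B.toQuadraticMap.IsOrtho (e i) (e j) := fun i j hij =>
    (LinearMap.BilinForm.toQuadraticMap_isOrtho (LinearMap.BilinForm.isSymm_iff.mp hB)).mpr (LinearMap.isOrthoᵢ_def.mp he i j hij)
  have hcontr : ∀ d : Module.Dual K V, contractLeft d x = 0 := by
    have hpolar : ∀ v : V,
        contractLeft (QuadraticMap.polarBilin B.toQuadraticMap v) x = 0 := by
      intro v
      rw [← CliffordCentralAux.ι_mul_sub_involute_mul]
      have h2 := congrArg involute (hx v)
      simp only [map_mul, involute_ι, involute_involute, mul_neg, neg_mul] at h2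
      have h3 : involute x * ι B.toQuadraticMap v = ι B.toQuadraticMap v * x :=
        neg_injective h2
      rw [h3, sub_self]
    intro d
    obtain ⟨v, hv⟩ := (B.toDual hBnd).surjective d
    have hd : d = B v := by
      ext w
      rw [← hv, LinearMap.BilinForm.toDual_def]
    have hpB : QuadraticMap.polarBilin B.toQuadraticMap v = (2 : K) • B v := by
      ext w
      rw [QuadraticMap.polarBilin_apply_apply, LinearMap.BilinMap.polar_toQuadraticMap,
        LinearMap.smul_apply, smul_eq_mul, two_mul, ← hB.eq w v]
    have h0 := hpolar v
    rw [hpB, map_smul, LinearMap.smul_apply, smul_eq_zero] at h0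
    rcases h0 with h0 | h0
    · exact absurd h0 two_ne_zero
    · rw [hd]; exact h0
  exact CliffordCentralAux.scalar_of_forall_contract_eq_zero _ e horth hcontr
end
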